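/- Let Σ be an alphabet, 𝕄 = (M,+,val,𝟘) a timed valuation monoid, 𝓛 ⊆ 𝕋Σ⁺ a deterministically recognizable timed language and r : 𝕋Σ⁺ → M a deterministically recognizable quantitative timed language over 𝕄. Then the quantitative timed language r ∩ 𝓛 is deterministically recognizable over 𝕄. -/

import Mathlib

open scoped NNReal Classical

/-! # Core definitions: timed automata and weighted timed automata -/

/-- Comparison operators ⋈ ∈ {<, ≤, =, ≥, >}. -/
inductive Cmp : Type
  | lt | le | eq | ge | gt
  deriving DecidableEq

/-- Evaluation of a comparison `r ⋈ c` for `r ∈ ℝ≥0` and `c ∈ ℕ`. -/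
def Cmp.eval : Cmp → ℝ≥0 → ℕ → Prop
  | .lt, r, c => r < (c : ℝ≥0)
  | .le, r, c => r ≤ (c : ℝ≥0)
  | .eq, r, c => r = (c : ℝ≥0)
  | .ge, r, c => (c : ℝ≥0) ≤ r
  | .gt, r, c => (c : ℝ≥0) < r

/-- Clock constraints over a set `C` of clocks: `True` or conjunctions of `x ⋈ c`. -/
inductive ClockConstraint (C : Type) : Type
  | tt : ClockConstraint C
  | atom : C → Cmp → ℕ → ClockConstraint C
  | conj : ClockConstraint C → ClockConstraint C → ClockConstraint C

/-- A clock valuation assigns a non-negative real to each clock. -/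
def ClockVal (C : Type) : Type := C → ℝ≥0

/-- Satisfaction of clock constraints. -/
def ClockConstraint.Sat {C : Type} (ν : ClockVal C) : ClockConstraint C → Prop
  | .tt => True
  | .atom x op c => op.eval (ν x) c
  | .conj φ ψ => φ.Sat ν ∧ ψ.Sat ν

/-- `ν + t`: add `t` to every clock. -/
def ClockVal.add {C : Type} (ν : ClockVal C) (t : ℝ≥0) : ClockVal C := fun x => ν x + t

/-- `ν[Λ := 0]`: reset the clocks in `Λ` to `0`. -/
noncomputable def ClockVal.reset {C : Type} (ν : ClockVal C) (Λ : Set C) : ClockVal C :=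
  fun x => if x ∈ Λ then 0 else ν x

/-- The clock valuation assigning `0` to every clock. -/
def ClockVal.zero {C : Type} : ClockVal C := fun _ => 0

/-- An edge of a timed automaton: an element of `L × Σ × Φ(C) × 2^C × L`. -/
structure Edge (L A C : Type) : Type where
  src : L
  label : A
  guard : ClockConstraint C
  reset : Set C
  dst : L

/-- A timed automaton over the alphabet `A`. -/
structure TimedAutomaton (A : Type) : Type 1 where
  L : Type
  C : Type
  finL : Finite L
  finC : Finite C
  I : Set L
  F : Set L
  E : Set (Edge L A C)
  finE : E.Finite

/-- A (non-empty finite) timed word over `A`. -/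
abbrev TimedWord (A : Type) : Type := { w : List (A × ℝ≥0) // w ≠ [] }

/-- `T.IsRunFrom ℓ ν w es` holds iff `es` is the sequence of edges of a run of `T`
reading the timed word `w`, starting in location `ℓ` with clock valuation `ν`,
and ending in a final location. -/
def TimedAutomaton.IsRunFrom {A : Type} (T : TimedAutomaton A) :
    T.L → ClockVal T.C → List (A × ℝ≥0) → List (Edge T.L A T.C) → Prop
  | ℓ, _, [], [] => ℓ ∈ T.F
  | ℓ, ν, (a, t) :: w, e :: es =>
      e ∈ T.E ∧ e.src = ℓ ∧ e.label = a ∧ e.guard.Sat (ν.add t) ∧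
      T.IsRunFrom e.dst ((ν.add t).reset e.reset) w es
  | _, _, [], _ :: _ => False
  | _, _, _ :: _, [] => False

/-- `Run_T(w)`: the set of runs (identified with their edge sequences) of `T` on `w`. -/
def TimedAutomaton.RunOn {A : Type} (T : TimedAutomaton A) (w : TimedWord A) :
    Set (List (Edge T.L A T.C)) :=
  { es | ∃ ℓ₀ ∈ T.I, T.IsRunFrom ℓ₀ ClockVal.zero w.1 es }

/-- `L(T)`: the timed language accepted by `T`. -/
def TimedAutomaton.Lang {A : Type} (T : TimedAutomaton A) : Set (TimedWord A) :=
  { w | (T.RunOn w).Nonempty }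

/-- A timed automaton is unambiguous if every timed word has at most one run. -/
def TimedAutomaton.Unambiguous {A : Type} (T : TimedAutomaton A) : Prop :=
  ∀ w : TimedWord A, (T.RunOn w).Subsingleton

/-- A timed automaton is deterministic if it has a single initial location and the guards of
any two distinct edges with the same source and label are jointly unsatisfiable. -/
def TimedAutomaton.Deterministic {A : Type} (T : TimedAutomaton A) : Prop :=
  (∃ ℓ, T.I = {ℓ}) ∧
  ∀ e₁ ∈ T.E, ∀ e₂ ∈ T.E, e₁.src = e₂.src → e₁.label = e₂.label → e₁ ≠ e₂ →
    ∀ ν : ClockVal T.C, ¬ (e₁.guard.Sat ν ∧ e₂.guard.Sat ν)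

/-- A timed automaton is sequential if it has a single initial location and any two edges
with the same source and label are equal. -/
def TimedAutomaton.Sequential {A : Type} (T : TimedAutomaton A) : Prop :=
  (∃ ℓ, T.I = {ℓ}) ∧
  ∀ e₁ ∈ T.E, ∀ e₂ ∈ T.E, e₁.src = e₂.src → e₁.label = e₂.label → e₁ = e₂

/-- A timed language is recognizable by a timed automaton satisfying `P`. -/
def TLRecognizableBy {A : Type} (P : TimedAutomaton A → Prop) (𝓛 : Set (TimedWord A)) : Prop :=
  ∃ T : TimedAutomaton A, P T ∧ T.Lang = 𝓛

/-- A weighted timed automaton over the alphabet `A` and (the domain `M` of) a timed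
valuation monoid: a timed automaton together with weights on locations and edges.
The timed valuation monoid itself is given by an `AddCommMonoid M` instance together with a
timed valuation function `val : List ((M × M) × ℝ≥0) → M` (only its values on non-empty
lists, i.e. on `𝕋(M×M)⁺`, ever matter). -/
structure WTA (A M : Type) extends TimedAutomaton A where
  wtL : L → M
  wtE : Edge L A C → M

/-- The timed word `wt♯(ρ) ∈ 𝕋(M×M)⁺` associated with a run: the `i`-th letter is
`((wt(ℓ_{i-1}), wt(e_i)), t_i)`, where `ℓ_{i-1}` is the source location of edge `e_i`. -/
def WTA.runWord {A M : Type} (W : WTA A M) (w : List (A × ℝ≥0))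
    (es : List (Edge W.L A W.C)) : List ((M × M) × ℝ≥0) :=
  List.zipWith (fun (p : A × ℝ≥0) e => ((W.wtL e.src, W.wtE e), p.2)) w es

/-- The behavior `‖W‖ : 𝕋A⁺ → M` of a WTA: `‖W‖(w) = Σ (val(wt♯(ρ)) : ρ ∈ Run_W(w))`,
the empty sum being `0` (the monoid unit `𝟘`). -/
noncomputable def WTA.behavior {A M : Type} [AddCommMonoid M]
    (val : List ((M × M) × ℝ≥0) → M) (W : WTA A M) (w : TimedWord A) : M :=
  ∑ᶠ es ∈ W.toTimedAutomaton.RunOn w, val (W.runWord w.1 es)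

/-- A quantitative timed language `r : 𝕋A⁺ → M` is recognizable over the timed valuation
monoid `(M, +, val, 𝟘)` by a WTA whose underlying timed automaton satisfies `P`. -/
def QTLRecognizableBy {A M : Type} [AddCommMonoid M] (val : List ((M × M) × ℝ≥0) → M)
    (P : TimedAutomaton A → Prop) (r : TimedWord A → M) : Prop :=
  ∃ W : WTA A M, P W.toTimedAutomaton ∧ ∀ w, W.behavior val w = r w

/-- Recognizability (no restriction on the underlying timed automaton). -/
def QTLRecognizable {A M : Type} [AddCommMonoid M] (val : List ((M × M) × ℝ≥0) → M)
    (r : TimedWord A → M) : Prop :=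
  ∃ W : WTA A M, ∀ w, W.behavior val w = r w

/-- Renaming of timed words along `h : Γ → A`. -/
def mapTimedWord {Γ A : Type} (h : Γ → A) (v : TimedWord Γ) : TimedWord A :=
  ⟨v.1.map (fun p => (h p.1, p.2)), by
    cases v with
    | mk l hl => cases l with
      | nil => exact absurd rfl hl
      | cons p l => simp⟩

/-- `h(r)(w) = Σ (r(v) : v ∈ 𝕋Γ⁺, h(v) = w)` (a finite sum when `Γ` is finite). -/
noncomputable def pushQTL {Γ A M : Type} [AddCommMonoid M] (h : Γ → A)
    (r : TimedWord Γ → M) (w : TimedWord A) : M :=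
  ∑ᶠ v ∈ { v : TimedWord Γ | mapTimedWord h v = w }, r v

/-- `(val ∘ g)(w) = val((g(a₁),t₁)…(g(aₙ),tₙ))`. -/
def valComp {A M : Type} (val : List ((M × M) × ℝ≥0) → M) (g : A → M × M)
    (w : TimedWord A) : M :=
  val (w.1.map (fun p => (g p.1, p.2)))

/-- The intersection `r ∩ 𝓛` of a quantitative timed language with a timed language. -/
noncomputable def interQTL {A M : Type} [Zero M] (r : TimedWord A → M)
    (𝓛 : Set (TimedWord A)) (w : TimedWord A) : M :=
  if w ∈ 𝓛 then r w else 0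

/-- Membership in the Nivat class `N^P(A, 𝕄)`: `𝕃 = h((val ∘ g) ∩ 𝓛)` for some alphabet `Γ`,
maps `h : Γ → A`, `g : Γ → M × M` and a timed language `𝓛` recognizable by a timed
automaton satisfying `P`. -/
def NivatMem {A M : Type} [AddCommMonoid M] (val : List ((M × M) × ℝ≥0) → M)
    (P : ∀ {Γ : Type}, TimedAutomaton Γ → Prop) (𝕃 : TimedWord A → M) : Prop :=
  ∃ (Γ : Type) (_ : Finite Γ) (_ : Nonempty Γ) (h : Γ → A) (g : Γ → M × M)
    (𝓛 : Set (TimedWord Γ)),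
      TLRecognizableBy P 𝓛 ∧ ∀ w, 𝕃 w = pushQTL h (interQTL (valComp val g) 𝓛) w

/-- Membership in the class `H^P(A, 𝕄)`: `𝕃 = h(r)` for some alphabet `Γ`, `h : Γ → A`
and a quantitative timed language `r` recognizable by a WTA whose underlying timed
automaton satisfies `P`. -/
def HMem {A M : Type} [AddCommMonoid M] (val : List ((M × M) × ℝ≥0) → M)
    (P : ∀ {Γ : Type}, TimedAutomaton Γ → Prop) (𝕃 : TimedWord A → M) : Prop :=
  ∃ (Γ : Type) (_ : Finite Γ) (_ : Nonempty Γ) (h : Γ → A) (r : TimedWord Γ → M),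
      QTLRecognizableBy val (fun T => P T) r ∧ ∀ w, 𝕃 w = pushQTL h r w

/-- Idempotency of a timed valuation monoid. -/
def IsIdempotent (M : Type) [Add M] : Prop := ∀ m : M, m + m = m

/-- Location-independence of a timed valuation function: the value of `val` on a non-empty
timed word over `M × M` depends only on the second components and the time stamps. -/
def LocIndep {M : Type} (val : List ((M × M) × ℝ≥0) → M) : Prop :=
  ∀ l l' : List ((M × M) × ℝ≥0), l ≠ [] →
    l.map (fun p => (p.1.2, p.2)) = l'.map (fun p => (p.1.2, p.2)) → val l = val l'

section Aux

variable {A M : Type}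

/-- Rename clocks in a clock constraint. -/
def ccMap {C D : Type} (f : C → D) : ClockConstraint C → ClockConstraint D
  | .tt => .tt
  | .atom x o c => .atom (f x) o c
  | .conj φ ψ => .conj (ccMap f φ) (ccMap f ψ)

lemma ccMap_sat {C D : Type} (f : C → D) (φ : ClockConstraint C) (ν : ClockVal D) :
    (ccMap f φ).Sat ν ↔ φ.Sat (ν ∘ f) := by
  induction φ <;> simp [ccMap, ClockConstraint.Sat, *] <;> rfl

/-- Left inverse to `ccMap Sum.inl`. -/
def ccUnmapL {C D : Type} : ClockConstraint (C ⊕ D) → ClockConstraint C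
  | .tt => .tt
  | .atom (Sum.inl x) o c => .atom x o c
  | .atom (Sum.inr _) _ _ => .tt
  | .conj φ ψ => .conj (ccUnmapL φ) (ccUnmapL ψ)

lemma ccUnmapL_map {C D : Type} (φ : ClockConstraint C) :
    ccUnmapL (ccMap (Sum.inl : C → C ⊕ D) φ) = φ := by
  induction φ <;> simp [ccMap, ccUnmapL, *]

def prodEdge {L1 L2 C1 C2 : Type} (e1 : Edge L1 A C1) (e2 : Edge L2 A C2) :
    Edge (L1 × L2) A (C1 ⊕ C2) :=
  ⟨(e1.src, e2.src), e1.label,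
   .conj (ccMap Sum.inl e1.guard) (ccMap Sum.inr e2.guard),
   (Sum.inl '' e1.reset) ∪ (Sum.inr '' e2.reset),
   (e1.dst, e2.dst)⟩

def projEdge1 {L1 L2 C1 C2 : Type} (e : Edge (L1 × L2) A (C1 ⊕ C2)) : Edge L1 A C1 :=
  ⟨e.src.1, e.label,
   (match e.guard with | .conj a _ => ccUnmapL a | _ => .tt),
   Sum.inl ⁻¹' e.reset, e.dst.1⟩

lemma projEdge1_prodEdge {L1 L2 C1 C2 : Type} (e1 : Edge L1 A C1) (e2 : Edge L2 A C2) :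
    projEdge1 (prodEdge e1 e2) = e1 := by
  have hres : (Sum.inl ⁻¹' ((Sum.inl '' e1.reset) ∪ (Sum.inr '' e2.reset)) : Set C1)
      = e1.reset := by
    ext x; simp
  cases e1
  simp [projEdge1, prodEdge, ccUnmapL_map, hres]

lemma elim_add {C D : Type} (ν1 : ClockVal C) (ν2 : ClockVal D) (t : ℝ≥0) :
    ClockVal.add (Sum.elim ν1 ν2 : ClockVal (C ⊕ D)) t = Sum.elim (ν1.add t) (ν2.add t) := by
  funext x; cases x <;> rfl

lemma elim_reset {C D : Type} (ν1 : ClockVal C) (ν2 : ClockVal D) (Λ1 : Set C) (Λ2 : Set D) :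
    ClockVal.reset (Sum.elim ν1 ν2 : ClockVal (C ⊕ D)) (Sum.inl '' Λ1 ∪ Sum.inr '' Λ2)
      = Sum.elim (ν1.reset Λ1) (ν2.reset Λ2) := by
  funext x; cases x <;> simp [ClockVal.reset] <;> rfl

lemma zero_elim {C D : Type} :
    (ClockVal.zero : ClockVal (C ⊕ D)) = Sum.elim ClockVal.zero ClockVal.zero := by
  funext x; cases x <;> rfl

noncomputable def prodTA (T1 T2 : TimedAutomaton A) : TimedAutomaton A where
  L := T1.L × T2.L
  C := T1.C ⊕ T2.C
  finL := by have := T1.finL; have := T2.finL; exact inferInstance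
  finC := by have := T1.finC; have := T2.finC; exact inferInstance
  I := T1.I ×ˢ T2.I
  F := T1.F ×ˢ T2.F
  E := {e | ∃ e1 ∈ T1.E, ∃ e2 ∈ T2.E, e1.label = e2.label ∧ e = prodEdge e1 e2}
  finE := by
    apply Set.Finite.subset (Set.Finite.image2 prodEdge T1.finE T2.finE)
    rintro e ⟨e1, h1, e2, h2, _, rfl⟩
    exact Set.mem_image2_of_mem h1 h2

lemma isRunFrom_length (T : TimedAutomaton A) :
    ∀ (w : List (A × ℝ≥0)) (es : List (Edge T.L A T.C)) ℓ ν,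
      T.IsRunFrom ℓ ν w es → es.length = w.length := by
  intro w
  induction w with
  | nil =>
    rintro (_ | ⟨e, es⟩) ℓ ν h
    · rfl
    · exact absurd h (by simp [TimedAutomaton.IsRunFrom])
  | cons p w ih =>
    rintro (_ | ⟨e, es⟩) ℓ ν h
    · exact absurd h (by cases p; simp [TimedAutomaton.IsRunFrom])
    · cases p
      obtain ⟨-, -, -, -, h5⟩ := h
      simpa using ih es _ _ h5

lemma det_isRunFrom_unique {T : TimedAutomaton A} (hdet : T.Deterministic) :
    ∀ (w : List (A × ℝ≥0)) (es es' : List (Edge T.L A T.C)) ℓ ν,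
      T.IsRunFrom ℓ ν w es → T.IsRunFrom ℓ ν w es' → es = es' := by
  intro w
  induction w with
  | nil =>
    rintro (_ | ⟨e, es⟩) (_ | ⟨e', es'⟩) ℓ ν h h'
    · rfl
    · exact absurd h' (by simp [TimedAutomaton.IsRunFrom])
    · exact absurd h (by simp [TimedAutomaton.IsRunFrom])
    · exact absurd h (by simp [TimedAutomaton.IsRunFrom])
  | cons p w ih =>
    rintro (_ | ⟨e, es⟩) (_ | ⟨e', es'⟩) ℓ ν h h' <;> cases p
    · rfl
    · exact absurd h (by simp [TimedAutomaton.IsRunFrom])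
    · exact absurd h' (by simp [TimedAutomaton.IsRunFrom])
    · obtain ⟨hE, hs, hl, hg, hrest⟩ := h
      obtain ⟨hE', hs', hl', hg', hrest'⟩ := h'
      have hee : e = e' := by
        by_contra hne
        exact hdet.2 e hE e' hE' (hs.trans hs'.symm) (hl.trans hl'.symm) hne _ ⟨hg, hg'⟩
      subst hee
      rw [ih es es' _ _ hrest hrest']

lemma prod_isRunFrom_forward (T1 T2 : TimedAutomaton A) :
    ∀ (w : List (A × ℝ≥0)) es1 es2 ℓ1 ℓ2 (ν1 : ClockVal T1.C) (ν2 : ClockVal T2.C),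
      T1.IsRunFrom ℓ1 ν1 w es1 → T2.IsRunFrom ℓ2 ν2 w es2 →
      (prodTA T1 T2).IsRunFrom (ℓ1, ℓ2) (Sum.elim ν1 ν2) w (List.zipWith prodEdge es1 es2) := by
  intro w
  induction w with
  | nil =>
    rintro (_ | ⟨e1, es1⟩) es2 ℓ1 ℓ2 ν1 ν2 h1 h2
    · rcases es2 with _ | ⟨e2, es2⟩
      · exact ⟨h1, h2⟩
      · exact absurd h2 (by simp [TimedAutomaton.IsRunFrom])
    · exact absurd h1 (by simp [TimedAutomaton.IsRunFrom])
  | cons p w ih =>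
    rintro (_ | ⟨e1, es1⟩) es2 ℓ1 ℓ2 ν1 ν2 h1 h2
    · exact absurd h1 (by cases p; simp [TimedAutomaton.IsRunFrom])
    · rcases es2 with _ | ⟨e2, es2⟩
      · exact absurd h2 (by cases p; simp [TimedAutomaton.IsRunFrom])
      · obtain ⟨a, t⟩ := p
        obtain ⟨hE1, hs1, hl1, hg1, hr1⟩ := h1
        obtain ⟨hE2, hs2, hl2, hg2, hr2⟩ := h2
        refine ⟨⟨e1, hE1, e2, hE2, hl1.trans hl2.symm, rfl⟩, ?_, ?_, ?_, ?_⟩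
        · simp [prodEdge, hs1, hs2] <;> rfl
        · simpa [prodEdge] using hl1
        · rw [show (prodEdge e1 e2).guard
              = ClockConstraint.conj (ccMap Sum.inl e1.guard) (ccMap Sum.inr e2.guard) from rfl]
          erw [elim_add]
          exact ⟨(ccMap_sat _ _ _).2 hg1,
                 (ccMap_sat _ _ _).2 hg2⟩
        · show (prodTA T1 T2).IsRunFrom (e1.dst, e2.dst)
            (ClockVal.reset (ClockVal.add (Sum.elim ν1 ν2) t)
              ((Sum.inl '' e1.reset) ∪ (Sum.inr '' e2.reset))) w _
          erw [elim_add, elim_reset]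
          exact ih es1 es2 e1.dst e2.dst _ _ hr1 hr2

lemma prod_isRunFrom_backward (T1 T2 : TimedAutomaton A) :
    ∀ (w : List (A × ℝ≥0)) es ℓ1 ℓ2 (ν1 : ClockVal T1.C) (ν2 : ClockVal T2.C),
      (prodTA T1 T2).IsRunFrom (ℓ1, ℓ2) (Sum.elim ν1 ν2) w es →
      ∃ es1 es2, es = List.zipWith prodEdge es1 es2 ∧
        T1.IsRunFrom ℓ1 ν1 w es1 ∧ T2.IsRunFrom ℓ2 ν2 w es2 := by
  intro w
  induction w with
  | nil =>
    rintro (_ | ⟨e, es⟩) ℓ1 ℓ2 ν1 ν2 h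
    · exact ⟨[], [], rfl, h.1, h.2⟩
    · exact absurd h (by simp [TimedAutomaton.IsRunFrom])
  | cons p w ih =>
    rintro (_ | ⟨e, es⟩) ℓ1 ℓ2 ν1 ν2 h
    · exact absurd h (by cases p; simp [TimedAutomaton.IsRunFrom])
    · obtain ⟨a, t⟩ := p
      obtain ⟨hE, hs, hl, hg, hr⟩ := h
      obtain ⟨e1, hE1, e2, hE2, hlab, rfl⟩ := hE
      rw [show (prodEdge e1 e2).guard
            = ClockConstraint.conj (ccMap Sum.inl e1.guard) (ccMap Sum.inr e2.guard) from rfl] at hg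
      erw [elim_add] at hg
      obtain ⟨hg1, hg2⟩ := hg
      rw [show (prodEdge e1 e2).dst = (e1.dst, e2.dst) from rfl] at hr
      rw [show (prodEdge e1 e2).reset
            = (Sum.inl '' e1.reset) ∪ (Sum.inr '' e2.reset) from rfl] at hr
      erw [elim_add, elim_reset] at hr
      obtain ⟨es1, es2, rfl, hr1, hr2⟩ := ih es e1.dst e2.dst _ _ hr
      have hsrc : e1.src = ℓ1 ∧ e2.src = ℓ2 := Prod.mk.injEq .. ▸ hs
      refine ⟨e1 :: es1, e2 :: es2, rfl,
        ⟨hE1, hsrc.1, ?_, (ccMap_sat _ _ _).1 hg1, hr1⟩,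
        ⟨hE2, hsrc.2, ?_, (ccMap_sat _ _ _).1 hg2, hr2⟩⟩
      · exact hl
      · exact hlab.symm.trans hl

noncomputable def prodWTA (W : WTA A M) (T : TimedAutomaton A) : WTA A M where
  toTimedAutomaton := prodTA W.toTimedAutomaton T
  wtL := fun p => W.wtL p.1
  wtE := fun e => W.wtE (projEdge1 e)

lemma prodTA_det {T1 T2 : TimedAutomaton A} (h1 : T1.Deterministic) (h2 : T2.Deterministic) :
    (prodTA T1 T2).Deterministic := by
  obtain ⟨⟨ι1, hι1⟩, hd1⟩ := h1
  obtain ⟨⟨ι2, hι2⟩, hd2⟩ := h2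
  constructor
  · exact ⟨(ι1, ι2), by
      rw [show (prodTA T1 T2).I = T1.I ×ˢ T2.I from rfl, hι1, hι2,
        Set.singleton_prod_singleton]; rfl⟩
  · rintro e ⟨e1, hE1, e2, hE2, hlab, rfl⟩ e' ⟨e1', hE1', e2', hE2', hlab', rfl⟩
      hsrc hlabel hne ν hsat
    obtain ⟨hsat1, hsat2⟩ := hsat
    obtain ⟨hs11, hs12⟩ : (ccMap Sum.inl e1.guard).Sat ν ∧ (ccMap Sum.inr e2.guard).Sat ν := hsat1
    obtain ⟨hs21, hs22⟩ : (ccMap Sum.inl e1'.guard).Sat ν ∧ (ccMap Sum.inr e2'.guard).Sat ν := hsat2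
    have hsrc1 : e1.src = e1'.src := congrArg Prod.fst hsrc
    have hsrc2 : e2.src = e2'.src := congrArg Prod.snd hsrc
    have hlabel1 : e1.label = e1'.label := hlabel
    by_cases h11 : e1 = e1'
    · have h22 : e2 ≠ e2' := fun h => hne (by rw [h11, h])
      exact hd2 e2 hE2 e2' hE2' hsrc2 (hlab.symm.trans (hlabel1.trans hlab')) h22
        (ν ∘ Sum.inr) ⟨(ccMap_sat _ _ _).1 hs12, (ccMap_sat _ _ _).1 hs22⟩
    · exact hd1 e1 hE1 e1' hE1' hsrc1 hlabel1 h11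
        (ν ∘ Sum.inl) ⟨(ccMap_sat _ _ _).1 hs11, (ccMap_sat _ _ _).1 hs21⟩

lemma zipWith_prodEdge_left_inj {L1 L2 C1 C2 : Type} :
    ∀ (es2 : List (Edge L2 A C2)) (es1 es1' : List (Edge L1 A C1)),
      es1.length = es2.length → es1'.length = es2.length →
      List.zipWith prodEdge es1 es2 = List.zipWith prodEdge es1' es2 → es1 = es1' := by
  intro es2
  induction es2 with
  | nil =>
    intro es1 es1' h h' _
    have h1 : es1 = [] := by simpa using h
    have h2 : es1' = [] := by simpa using h'
    rw [h1, h2]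
  | cons c es2 ih =>
    rintro (_ | ⟨a, es1⟩) (_ | ⟨b, es1'⟩) h h' heq
    · rfl
    · simp at h
    · simp at h'
    · simp only [List.zipWith_cons_cons, List.cons.injEq] at heq
      have hab : a = b := by
        have := congrArg projEdge1 heq.1
        rwa [projEdge1_prodEdge, projEdge1_prodEdge] at this
      rw [hab, ih es1 es1' (by simpa using h) (by simpa using h') heq.2]

lemma prodWTA_runWord (W : WTA A M) (T : TimedAutomaton A) :
    ∀ (w : List (A × ℝ≥0)) (es1 : List (Edge W.L A W.C)) (es2 : List (Edge T.L A T.C)),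
      es1.length = es2.length →
      (prodWTA W T).runWord w (List.zipWith prodEdge es1 es2) = W.runWord w es1 := by
  intro w
  induction w with
  | nil => intro es1 es2 _; rfl
  | cons p w ih =>
    rintro (_ | ⟨e1, es1⟩) (_ | ⟨e2, es2⟩) h
    · rfl
    · simp at h
    · simp at h
    · simp only [List.zipWith_cons_cons, WTA.runWord] at *
      refine (congrArg₂ List.cons rfl (ih es1 es2 (by simpa using h))).trans ?_
      congr 1
      show ((W.wtL (prodEdge e1 e2).src.1, W.wtE (projEdge1 (prodEdge e1 e2))), p.2) = _
      rw [projEdge1_prodEdge]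
      rfl


end Aux

/-- If `𝓛 ⊆ 𝕋Σ⁺` is a deterministically recognizable timed language and
`r : 𝕋Σ⁺ → M` is a deterministically recognizable quantitative timed language over a timed
valuation monoid `𝕄`, then `r ∩ 𝓛` is deterministically recognizable over `𝕄`. -/
theorem interQTL_deterministically_recognizable {S M : Type} [Finite S] [Nonempty S]
    [AddCommMonoid M] (val : List ((M × M) × ℝ≥0) → M)
    (𝓛 : Set (TimedWord S)) (h𝓛 : TLRecognizableBy TimedAutomaton.Deterministic 𝓛)
    (r : TimedWord S → M)
    (hr : QTLRecognizableBy val TimedAutomaton.Deterministic r) :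
    QTLRecognizableBy val TimedAutomaton.Deterministic (interQTL r 𝓛) := by
  obtain ⟨T, hTdet, hTLang⟩ := h𝓛
  obtain ⟨W, hWdet, hWbeh⟩ := hr
  refine ⟨prodWTA W T, prodTA_det hWdet hTdet, fun w => ?_⟩
  obtain ⟨ι1, hι1⟩ := hWdet.1
  obtain ⟨ι2, hι2⟩ := hTdet.1
  have hI : (prodTA W.toTimedAutomaton T).I = {(ι1, ι2)} := by
    show W.I ×ˢ T.I = _
    rw [hι1, hι2, Set.singleton_prod_singleton]; rfl
  by_cases hw : w ∈ 𝓛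
  · have hwT : w ∈ T.Lang := hTLang ▸ hw
    obtain ⟨es2, ℓ0, hℓ0, hrun2⟩ := hwT
    have hℓ0' : ℓ0 = ι2 := by rwa [hι2, Set.mem_singleton_iff] at hℓ0
    rw [hℓ0'] at hrun2
    have huniq2 : ∀ es ∈ T.RunOn w, es = es2 := by
      rintro es ⟨ℓ, hℓ, hrun⟩
      rw [hι2, Set.mem_singleton_iff] at hℓ; subst hℓ
      exact det_isRunFrom_unique hTdet w.1 es es2 _ _ hrun hrun2
    have hset : (prodTA W.toTimedAutomaton T).RunOn w
        = (fun es1 => List.zipWith prodEdge es1 es2) '' W.RunOn w := by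
      ext es
      constructor
      · rintro ⟨ℓ, hℓ, hrun⟩
        erw [hI, Set.mem_singleton_iff] at hℓ; subst hℓ
        erw [zero_elim] at hrun
        obtain ⟨es1, es2', rfl, h1, h2⟩ :=
          prod_isRunFrom_backward W.toTimedAutomaton T w.1 _ ι1 ι2 _ _ hrun
        have hes2 : es2' = es2 :=
          huniq2 es2' ⟨ι2, by rw [hι2]; exact rfl, h2⟩
        subst hes2
        exact ⟨es1, ⟨ι1, by rw [hι1]; exact rfl, h1⟩, rfl⟩
      · rintro ⟨es1, ⟨ℓ, hℓ, hrun1⟩, rfl⟩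
        rw [hι1, Set.mem_singleton_iff] at hℓ
        rw [hℓ] at hrun1
        refine ⟨(ι1, ι2), by rw [hI]; exact rfl, ?_⟩
        erw [zero_elim]
        exact prod_isRunFrom_forward W.toTimedAutomaton T w.1 es1 es2 ι1 ι2 _ _ hrun1 hrun2
    have hlen2 : es2.length = w.1.length := isRunFrom_length T w.1 es2 _ _ hrun2
    have hinj : Set.InjOn (fun es1 => List.zipWith prodEdge es1 es2)
        (W.toTimedAutomaton.RunOn w) := by
      rintro a ⟨ℓa, _, ha⟩ b ⟨ℓb, _, hb⟩ hab
      exact zipWith_prodEdge_left_inj es2 a b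
        ((isRunFrom_length _ w.1 a _ _ ha).trans hlen2.symm)
        ((isRunFrom_length _ w.1 b _ _ hb).trans hlen2.symm) hab
    have hbeh : (prodWTA W T).behavior val w
        = ∑ᶠ es1 ∈ W.toTimedAutomaton.RunOn w,
            val ((prodWTA W T).runWord w.1 (List.zipWith prodEdge es1 es2)) := by
      show (∑ᶠ es ∈ (prodTA W.toTimedAutomaton T).RunOn w,
          val ((prodWTA W T).runWord w.1 es)) = _
      rw [hset]
      exact finsum_mem_image hinj
    rw [hbeh, interQTL, if_pos hw, ← hWbeh w]
    apply finsum_mem_congr rfl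
    rintro es1 ⟨ℓ, _, hrun1⟩
    rw [prodWTA_runWord W T w.1 es1 es2
      ((isRunFrom_length _ w.1 es1 _ _ hrun1).trans hlen2.symm)]
  · have hempty : (prodTA W.toTimedAutomaton T).RunOn w = ∅ := by
      ext es
      simp only [Set.mem_empty_iff_false, iff_false]
      rintro ⟨ℓ, hℓ, hrun⟩
      erw [hI, Set.mem_singleton_iff] at hℓ; subst hℓ
      erw [zero_elim] at hrun
      obtain ⟨es1, es2, rfl, h1, h2⟩ :=
        prod_isRunFrom_backward W.toTimedAutomaton T w.1 _ ι1 ι2 _ _ hrun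
      exact hw (hTLang ▸ ⟨es2, ι2, by rw [hι2]; exact rfl, h2⟩)
    have : (prodWTA W T).behavior val w = 0 := by
      show (∑ᶠ es ∈ (prodTA W.toTimedAutomaton T).RunOn w,
          val ((prodWTA W T).runWord w.1 es)) = 0
      rw [hempty, finsum_mem_empty]
    rw [this, interQTL, if_neg hw]
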